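/- Suppose H = H_1 ⊗ H_2 is a tensor product of finite-dimensional complex Hilbert spaces, and the bases are of product form: a'_{(m,n)} = a'¹_m ⊗ a'²_n and b_{(m,n)} = b¹_m ⊗ b²_n, where {a'¹_m}, {b¹_m} are orthonormal bases of H_1 and {a'²_n}, {b²_n} are orthonormal bases of H_2. Then η(𝒜',ℬ) ≥ η(𝒜'¹,ℬ¹), where η(𝒜'¹,ℬ¹) is the state-independent disturbance of the measurements on H_1 given by {a'¹_m} and {b¹_m}. -/

import Mathlib

open scoped ComplexInnerProductSpace

noncomputable section

variable {H : Type*} [NormedAddCommGroup H] [InnerProductSpace ℂ H] [FiniteDimensional ℂ H]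
variable {ι ι' : Type*} [Fintype ι] [Fintype ι']

/-- The rank-one projector `|v⟩⟨v|`. -/
def ketbra (v : H) : H →ₗ[ℂ] H where
  toFun x := ⟪v, x⟫ • v
  map_add' x y := by simp [inner_add_right, add_smul]
  map_smul' c x := by simp [inner_smul_right, mul_smul]

/-- A density operator: self-adjoint, positive semidefinite, trace one. -/
def IsDensity (ρ : H →ₗ[ℂ] H) : Prop :=
  LinearMap.IsSymmetric ρ ∧ (∀ x : H, 0 ≤ (⟪x, ρ x⟫).re) ∧
    LinearMap.trace ℂ H ρ = 1

/-- The state-dependent error `ε_ρ(𝒜,𝒜')`. -/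
def sdError (a a' : ι → H) (ρ : H →ₗ[ℂ] H) : ℝ :=
  ⨆ i : ι, ‖LinearMap.trace ℂ H (ρ ∘ₗ (ketbra (a i) - ketbra (a' i)))‖

/-- The state-independent error `ε(𝒜,𝒜')`. -/
def siError (a a' : ι → H) : ℝ :=
  ⨆ ρ : {ρ : H →ₗ[ℂ] H // IsDensity ρ}, sdError a a' ρ.1

/-- The operator `|b_i⟩⟨b_i| − Σ_j |⟨a'_j, b_i⟩|² |a'_j⟩⟨a'_j|`. -/
def distOp (a' : ι' → H) (b : ι → H) (i : ι) : H →ₗ[ℂ] H :=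
  ketbra (b i) - ∑ j : ι', (‖⟪a' j, b i⟫‖ ^ 2 : ℂ) • ketbra (a' j)

/-- The state-dependent disturbance `η_ρ(𝒜',ℬ)`. -/
def sdDist (a' : ι' → H) (b : ι → H) (ρ : H →ₗ[ℂ] H) : ℝ :=
  ⨆ i : ι, ‖LinearMap.trace ℂ H (ρ ∘ₗ distOp a' b i)‖

/-- The state-independent disturbance `η(𝒜',ℬ)`. -/
def siDist (a' : ι' → H) (b : ι → H) : ℝ :=
  ⨆ ρ : {ρ : H →ₗ[ℂ] H // IsDensity ρ}, sdDist a' b ρ.1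

/-- The state-independent overall error `Δ(𝒜,𝒜',ℬ)`. -/
def siOverall (a a' b : ι → H) : ℝ :=
  ⨆ ρ : {ρ : H →ₗ[ℂ] H // IsDensity ρ}, (sdError a a' ρ.1 + sdDist a' b ρ.1)


set_option linter.unusedSectionVars false

@[simp] lemma ketbra_apply (v x : H) : ketbra v x = ⟪v, x⟫ • v := rfl

lemma inner_ketbra (v x : H) : ⟪x, ketbra v x⟫ = (‖⟪v, x⟫‖ ^ 2 : ℂ) := by
  rw [ketbra_apply, inner_smul_right, ← inner_conj_symm v x, mul_comm, Complex.mul_conj,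
    Complex.normSq_eq_norm_sq]
  norm_cast
  rw [RCLike.norm_conj]


lemma ketbra_isSymmetric (v : H) : (ketbra v).IsSymmetric := by
  intro x y
  rw [ketbra_apply, ketbra_apply, inner_smul_left, inner_smul_right,
    inner_conj_symm, mul_comm]


lemma trace_eq_sum_inner {n : ℕ} (b : OrthonormalBasis (Fin n) ℂ H) (f : H →ₗ[ℂ] H) :
    LinearMap.trace ℂ H f = ∑ i, ⟪b i, f (b i)⟫ := by
  rw [LinearMap.trace_eq_matrix_trace ℂ b.toBasis, Matrix.trace]
  congr 1
  ext i
  rw [Matrix.diag_apply, LinearMap.toMatrix_apply, b.coe_toBasis_repr_apply,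
    b.repr_apply_apply, b.coe_toBasis]


lemma trace_ketbra_comp (v : H) (f : H →ₗ[ℂ] H) :
    LinearMap.trace ℂ H (ketbra v ∘ₗ f) = ⟪v, f v⟫ := by
  set b := stdOrthonormalBasis ℂ H
  rw [trace_eq_sum_inner b]
  have : ∀ i, ⟪b i, (ketbra v ∘ₗ f) (b i)⟫ = ⟪b i, v⟫ * ⟪v, f (b i)⟫ := by
    intro i
    simp [inner_smul_right, mul_comm]
  simp_rw [this]
  calc ∑ i, ⟪b i, v⟫ * ⟪v, f (b i)⟫ = ∑ i, ⟪v, f (⟪b i, v⟫ • b i)⟫ := by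
        simp [inner_smul_right, map_smul]
    _ = ⟪v, f (∑ i, ⟪b i, v⟫ • b i)⟫ := by rw [← inner_sum, ← map_sum]
    _ = ⟪v, f v⟫ := by rw [b.sum_repr']


lemma trace_ketbra (v : H) : LinearMap.trace ℂ H (ketbra v) = (‖v‖ ^ 2 : ℂ) := by
  have h := trace_ketbra_comp v (LinearMap.id)
  simp only [LinearMap.comp_id, LinearMap.id_coe, id_eq] at h
  rw [h, inner_self_eq_norm_sq_to_K]
  norm_cast


lemma sum_normsq_inner {n : ℕ} (b : OrthonormalBasis (Fin n) ℂ H) (x : H) :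
    ∑ i, (‖⟪b i, x⟫‖ ^ 2 : ℝ) = ‖x‖ ^ 2 := by
  have h : (∑ i, (‖⟪b i, x⟫‖ ^ 2 : ℝ) : ℂ) = (‖x‖ ^ 2 : ℂ) := by
    push_cast
    calc (∑ i, (‖⟪b i, x⟫‖ ^ 2 : ℂ)) = ∑ i, ⟪x, ketbra (b i) x⟫ := by
          simp_rw [inner_ketbra]
      _ = ⟪x, ∑ i, ⟪b i, x⟫ • b i⟫ := by rw [inner_sum]; simp [inner_smul_right]
      _ = ⟪x, x⟫ := by rw [b.sum_repr']
      _ = (‖x‖ ^ 2 : ℂ) := by rw [inner_self_eq_norm_sq_to_K]; norm_cast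
  exact_mod_cast h


lemma distOp_isSymmetric (a' : ι' → H) (b : ι → H) (i : ι) :
    (distOp a' b i).IsSymmetric := by
  intro x y
  simp only [distOp, LinearMap.sub_apply, LinearMap.sum_apply, LinearMap.smul_apply,
    inner_sub_left, inner_sub_right, inner_sum, sum_inner, inner_smul_left, inner_smul_right]
  rw [ketbra_isSymmetric (b i) x y]
  congr 1
  refine Finset.sum_congr rfl fun j _ => ?_
  rw [ketbra_isSymmetric (a' j) x y, ← Complex.ofReal_pow, Complex.conj_ofReal]


lemma isDensity_ketbra (w : H) (hw : ‖w‖ = 1) : IsDensity (ketbra w) := by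
  refine ⟨ketbra_isSymmetric w, fun x => ?_, ?_⟩
  · rw [inner_ketbra, ← Complex.ofReal_pow, Complex.ofReal_re]
    positivity
  · rw [trace_ketbra, hw]
    norm_num

/-- trace of `ρ ∘ f` when `f` is diagonal in an orthonormal basis. -/


lemma trace_comp_eigen {n : ℕ} (u : OrthonormalBasis (Fin n) ℂ H) (f ρ : H →ₗ[ℂ] H)
    (lam : Fin n → ℝ) (hf : ∀ k, f (u k) = (lam k : ℂ) • u k) :
    LinearMap.trace ℂ H (ρ ∘ₗ f) = ∑ k, (lam k : ℂ) * ⟪u k, ρ (u k)⟫ := by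
  rw [trace_eq_sum_inner u]
  refine Finset.sum_congr rfl fun k _ => ?_
  rw [LinearMap.comp_apply, hf k, map_smul, inner_smul_right]


lemma density_diag_re (ρ : H →ₗ[ℂ] H) (hρ : IsDensity ρ) (x : H) :
    ⟪x, ρ x⟫ = ((⟪x, ρ x⟫.re : ℝ) : ℂ) := by
  have h : (starRingEnd ℂ) ⟪x, ρ x⟫ = ⟪x, ρ x⟫ := by
    rw [inner_conj_symm]
    exact hρ.1 x x
  exact (Complex.conj_eq_iff_re.mp h).symm


lemma density_sum_diag {n : ℕ} (u : OrthonormalBasis (Fin n) ℂ H) (ρ : H →ₗ[ℂ] H)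
    (hρ : IsDensity ρ) : ∑ k, (⟪u k, ρ (u k)⟫.re) = 1 := by
  have h : (∑ k, ⟪u k, ρ (u k)⟫) = 1 := by rw [← trace_eq_sum_inner u, hρ.2.2]
  have := congrArg Complex.re h
  simpa [Complex.re_sum] using this

/-- main norm bound for trace against a density. -/


lemma norm_trace_comp_le {n : ℕ} (u : OrthonormalBasis (Fin n) ℂ H) (f ρ : H →ₗ[ℂ] H)
    (hρ : IsDensity ρ) (lam : Fin n → ℝ) (hf : ∀ k, f (u k) = (lam k : ℂ) • u k)
    (M : ℝ) (hM : 0 ≤ M) (hlam : ∀ k, |lam k| ≤ M) :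
    ‖LinearMap.trace ℂ H (ρ ∘ₗ f)‖ ≤ M := by
  rw [trace_comp_eigen u f ρ lam hf]
  have hq : ∀ k, ⟪u k, ρ (u k)⟫ = ((⟪u k, ρ (u k)⟫.re : ℝ) : ℂ) :=
    fun k => density_diag_re ρ hρ _
  calc ‖∑ k, (lam k : ℂ) * ⟪u k, ρ (u k)⟫‖ ≤ ∑ k, ‖(lam k : ℂ) * ⟪u k, ρ (u k)⟫‖ :=
        norm_sum_le _ _
    _ ≤ ∑ k, M * (⟪u k, ρ (u k)⟫.re) := by
        refine Finset.sum_le_sum fun k _ => ?_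
        rw [hq k, norm_mul]
        simp only [Complex.norm_real, Real.norm_eq_abs]
        rw [abs_of_nonneg (hρ.2.1 (u k))]
        exact mul_le_mul_of_nonneg_right (by simpa using hlam k) (hρ.2.1 (u k))
    _ = M * ∑ k, (⟪u k, ρ (u k)⟫.re) := by rw [Finset.mul_sum]
    _ = M := by rw [density_sum_diag u ρ hρ, mul_one]


lemma inner_distOp (a' : ι' → H) (b : ι → H) (i : ι) (x : H) :
    ⟪x, distOp a' b i x⟫
      = ((‖⟪b i, x⟫‖ ^ 2 - ∑ j, ‖⟪a' j, b i⟫‖ ^ 2 * ‖⟪a' j, x⟫‖ ^ 2 : ℝ) : ℂ) := by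
  simp only [distOp, LinearMap.sub_apply, LinearMap.sum_apply, LinearMap.smul_apply,
    inner_sub_right, inner_sum, inner_smul_right, inner_ketbra]
  push_cast
  ring


lemma trace_distOp {d : ℕ} (a' : OrthonormalBasis (Fin d) ℂ H) (b : ι → H) (i : ι)
    (hb : ‖b i‖ = 1) : LinearMap.trace ℂ H (distOp (⇑a') b i) = 0 := by
  have h1 : ∀ j : Fin d, ‖a' j‖ = 1 := fun j => a'.orthonormal.1 j
  simp only [distOp, map_sub, map_sum, map_smul, trace_ketbra, hb, h1, smul_eq_mul,
    one_pow, mul_one, Complex.ofReal_one]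
  have h2 : ∑ j : Fin d, ((‖⟪a' j, b i⟫‖ : ℂ)) ^ 2 = ((∑ j, ‖⟪a' j, b i⟫‖ ^ 2 : ℝ) : ℂ) := by
    push_cast; rfl
  rw [h2, sum_normsq_inner a' (b i), hb]
  norm_num


lemma atMostOnePos {n : ℕ} (u : OrthonormalBasis (Fin n) ℂ H) (f : H →ₗ[ℂ] H)
    (lam : Fin n → ℝ) (hf : ∀ k, f (u k) = (lam k : ℂ) • u k) (bvec : H)
    (hneg : ∀ x : H, ⟪bvec, x⟫ = 0 → (⟪x, f x⟫).re ≤ 0)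
    (k l : Fin n) (hkl : k ≠ l) (hk : 0 < lam k) (hl : 0 < lam l) : False := by
  have hon := orthonormal_iff_ite.mp u.orthonormal
  by_cases hα : ⟪bvec, u k⟫ = 0
  · have h := hneg (u k) hα
    rw [hf k, inner_smul_right, hon k k] at h
    simp at h
    exact absurd h (not_le.mpr hk)
  · set x : H := ⟪bvec, u l⟫ • u k - ⟪bvec, u k⟫ • u l with hx
    have hbx : ⟪bvec, x⟫ = 0 := by
      rw [hx, inner_sub_right, inner_smul_right, inner_smul_right]
      ring
    have h := hneg x hbx
    have hfx : f x = (⟪bvec, u l⟫ * lam k) • u k - (⟪bvec, u k⟫ * lam l) • u l := by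
      rw [hx, map_sub, map_smul, map_smul, hf k, hf l, smul_smul, smul_smul]
    have hval : ⟪x, f x⟫ = ((‖⟪bvec, u l⟫‖ ^ 2 * lam k + ‖⟪bvec, u k⟫‖ ^ 2 * lam l : ℝ) : ℂ) := by
      rw [hx, hfx]
      simp only [inner_sub_left, inner_sub_right, inner_smul_left, inner_smul_right, hon,
        if_pos rfl, if_neg hkl, if_neg (Ne.symm hkl)]
      simp only [if_true, mul_one, mul_zero, sub_zero, zero_sub, mul_neg, sub_neg_eq_add]
      have e : ∀ (z : ℂ) (r : ℝ), z * (r : ℂ) * (starRingEnd ℂ) z = ((‖z‖ ^ 2 * r : ℝ) : ℂ) := by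
        intro z r
        rw [mul_comm z (r : ℂ), mul_assoc, Complex.mul_conj]
        push_cast [Complex.normSq_eq_norm_sq]
        ring
      rw [e, e]
      push_cast
      ring
    rw [hval] at h
    simp only [Complex.ofReal_re] at h
    have hnk : 0 < ‖⟪bvec, u k⟫‖ := norm_pos_iff.mpr hα
    have h1 : 0 < ‖⟪bvec, u k⟫‖ ^ 2 * lam l := mul_pos (pow_pos hnk 2) hl
    have h2 : 0 ≤ ‖⟪bvec, u l⟫‖ ^ 2 * lam k := by positivity
    linarith


lemma exists_max_abs {n : ℕ} (hn : 0 < n) (lam : Fin n → ℝ) (hsum : ∑ k, lam k = 0)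
    (hpos : ∀ k l, k ≠ l → 0 < lam k → 0 < lam l → False) :
    ∃ K, ∀ k, |lam k| ≤ lam K := by
  have hne : (Finset.univ : Finset (Fin n)).Nonempty := by
    simpa [Finset.univ_nonempty_iff] using Fin.pos_iff_nonempty.mp hn
  obtain ⟨K, -, hK⟩ := Finset.exists_max_image Finset.univ lam hne
  refine ⟨K, fun k => ?_⟩
  by_cases hall : ∀ l, lam l ≤ 0
  · have hz : ∀ l ∈ Finset.univ, lam l = 0 :=
      (Finset.sum_eq_zero_iff_of_nonpos (fun l _ => hall l)).mp hsum
    rw [hz k (Finset.mem_univ k), hz K (Finset.mem_univ K)]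
    simp
  · push_neg at hall
    obtain ⟨l₀, hl₀⟩ := hall
    have hKpos : 0 < lam K := lt_of_lt_of_le hl₀ (hK l₀ (Finset.mem_univ l₀))
    rcases le_or_gt 0 (lam k) with hk0 | hk0
    · rw [abs_of_nonneg hk0]; exact hK k (Finset.mem_univ k)
    · rw [abs_of_neg hk0]
      have hkK : k ≠ K := fun h => by rw [h] at hk0; linarith
      have hnonpos : ∀ l ∈ Finset.univ.erase K, 0 ≤ -lam l := by
        intro l hl
        rcases le_or_gt (lam l) 0 with h | h
        · linarith
        · exact (hpos l K (Finset.ne_of_mem_erase hl) h hKpos).elim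
      have hsum' : ∑ l ∈ Finset.univ.erase K, (-lam l) = lam K := by
        have h3 := Finset.add_sum_erase Finset.univ lam (Finset.mem_univ K)
        have h2 : ∑ l ∈ Finset.univ.erase K, lam l = -lam K := by linarith [h3, hsum]
        rw [Finset.sum_neg_distrib, h2, neg_neg]
      calc -lam k ≤ ∑ l ∈ Finset.univ.erase K, (-lam l) :=
            Finset.single_le_sum hnonpos (Finset.mem_erase.mpr ⟨hkK, Finset.mem_univ k⟩)
        _ = lam K := hsum'


lemma key_bound {d : ℕ} (hd : 0 < d) (a' b : OrthonormalBasis (Fin d) ℂ H)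
    (i : Fin d) (ρ : H →ₗ[ℂ] H) (hρ : IsDensity ρ) :
    ∃ (φ : H) (r : ℝ), ‖φ‖ = 1 ∧ 0 ≤ r ∧ ⟪φ, distOp (⇑a') (⇑b) i φ⟫ = (r : ℂ) ∧
      ‖LinearMap.trace ℂ H (ρ ∘ₗ distOp (⇑a') (⇑b) i)‖ ≤ r := by
  have hn : Module.finrank ℂ H = d := by
    rw [Module.finrank_eq_card_basis a'.toBasis, Fintype.card_fin]
  set D := distOp (⇑a') (⇑b) i with hD
  have hsym : D.IsSymmetric := distOp_isSymmetric (⇑a') (⇑b) i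
  set u := hsym.eigenvectorBasis hn with hu
  set lam := hsym.eigenvalues hn with hlam
  have hap : ∀ k, D (u k) = (lam k : ℂ) • u k := fun k => hsym.apply_eigenvectorBasis hn k
  have hon := orthonormal_iff_ite.mp u.orthonormal
  have hinner : ∀ k, ⟪u k, D (u k)⟫ = (lam k : ℂ) := by
    intro k
    rw [hap k, inner_smul_right, hon k k, if_pos rfl, mul_one]
  have htr0 : LinearMap.trace ℂ H D = 0 := trace_distOp a' (⇑b) i (b.orthonormal.1 i)
  have hsum : ∑ k, lam k = 0 := by
    have h1 : LinearMap.trace ℂ H D = ∑ k, (lam k : ℂ) := by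
      rw [trace_eq_sum_inner u]
      exact Finset.sum_congr rfl fun k _ => hinner k
    rw [htr0] at h1
    have : ((∑ k, lam k : ℝ) : ℂ) = 0 := by push_cast; exact h1.symm
    exact_mod_cast this
  have hneg : ∀ x : H, ⟪b i, x⟫ = 0 → (⟪x, D x⟫).re ≤ 0 := by
    intro x hx
    rw [hD, inner_distOp, Complex.ofReal_re, hx]
    simp only [norm_zero]
    have : (0:ℝ) ≤ ∑ j, ‖⟪a' j, b i⟫‖ ^ 2 * ‖⟪a' j, x⟫‖ ^ 2 :=
      Finset.sum_nonneg fun j _ => by positivity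
    nlinarith
  obtain ⟨K, hK⟩ := exists_max_abs hd lam hsum
    (fun k l hkl hk hl => atMostOnePos u D lam hap (b i) hneg k l hkl hk hl)
  refine ⟨u K, lam K, u.orthonormal.1 K, le_trans (abs_nonneg _) (hK K), hinner K, ?_⟩
  exact norm_trace_comp_le u D ρ hρ lam hap (lam K) (le_trans (abs_nonneg _) (hK K)) hK


set_option maxHeartbeats 2000000 in
/-- for product-form measurements on a tensor product `H = H₁ ⊗ H₂`
(encoded by a bilinear map `T` that multiplies inner products and has spanning range),
the disturbance dominates the disturbance of the first factor. -/
theorem disturbance_subsystem {H₁ H₂ : Type*}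
    [NormedAddCommGroup H₁] [InnerProductSpace ℂ H₁] [FiniteDimensional ℂ H₁]
    [NormedAddCommGroup H₂] [InnerProductSpace ℂ H₂] [FiniteDimensional ℂ H₂]
    {d₁ d₂ : ℕ} (hd : 2 ≤ d₁ * d₂)
    (T : H₁ →ₗ[ℂ] H₂ →ₗ[ℂ] H)
    (hT : ∀ (x u : H₁) (y v : H₂), ⟪T x y, T u v⟫ = ⟪x, u⟫ * ⟪y, v⟫)
    (hspan : Submodule.span ℂ {z : H | ∃ x y, T x y = z} = ⊤)
    (a'1 b1 : OrthonormalBasis (Fin d₁) ℂ H₁)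
    (a'2 b2 : OrthonormalBasis (Fin d₂) ℂ H₂) :
    siDist (⇑a'1) (⇑b1) ≤
      siDist (fun p : Fin d₁ × Fin d₂ => T (a'1 p.1) (a'2 p.2))
             (fun p : Fin d₁ × Fin d₂ => T (b1 p.1) (b2 p.2)) := by
  have hd₁ : 0 < d₁ := by
    rcases Nat.eq_zero_or_pos d₁ with h | h
    · subst h; simp at hd
    · exact h
  have hd₂ : 0 < d₂ := by
    rcases Nat.eq_zero_or_pos d₂ with h | h
    · subst h; simp at hd
    · exact h
  haveI : Nonempty (Fin d₁) := Fin.pos_iff_nonempty.mp hd₁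
  haveI : Nonempty (Fin d₂) := Fin.pos_iff_nonempty.mp hd₂
  set A' : Fin d₁ × Fin d₂ → H := fun p => T (a'1 p.1) (a'2 p.2) with hA'ystem
  set B : Fin d₁ × Fin d₂ → H := fun p => T (b1 p.1) (b2 p.2) with hB
  set N := Module.finrank ℂ H with hN
  -- uniform bound on the big space
  have hsymP : ∀ p, (distOp A' B p).IsSymmetric := fun p => distOp_isSymmetric A' B p
  set g : Fin d₁ × Fin d₂ → ℝ := fun p => ∑ k, |(hsymP p).eigenvalues rfl k| with hg
  have hg0 : ∀ p, 0 ≤ g p := fun p => Finset.sum_nonneg fun k _ => abs_nonneg _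
  have hbound : ∀ (ρ : H →ₗ[ℂ] H), IsDensity ρ → ∀ p,
      ‖LinearMap.trace ℂ H (ρ ∘ₗ distOp A' B p)‖ ≤ g p := by
    intro ρ hρ p
    refine norm_trace_comp_le ((hsymP p).eigenvectorBasis rfl) _ ρ hρ
      ((hsymP p).eigenvalues rfl) (fun k => (hsymP p).apply_eigenvectorBasis rfl k)
      (g p) (hg0 p) (fun k => by
        rw [hg]
        exact Finset.single_le_sum (f := fun l => |(hsymP p).eigenvalues rfl l|)
          (fun l _ => abs_nonneg _) (Finset.mem_univ k))
  obtain ⟨pmax, -, hpmax⟩ := Finset.exists_max_image Finset.univ g Finset.univ_nonempty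
  set C := g pmax with hC
  have hsd : ∀ (ρ : H →ₗ[ℂ] H), IsDensity ρ → sdDist A' B ρ ≤ C := by
    intro ρ hρ
    exact ciSup_le fun p => le_trans (hbound ρ hρ p) (hpmax p (Finset.mem_univ p))
  have hBdd : BddAbove (Set.range fun ρ : {ρ : H →ₗ[ℂ] H // IsDensity ρ} => sdDist A' B ρ.1) := by
    refine ⟨C, ?_⟩
    rintro v ⟨ρ, rfl⟩
    exact hsd ρ.1 ρ.2
  haveI : Nonempty {ρ : H₁ →ₗ[ℂ] H₁ // IsDensity ρ} :=
    ⟨⟨ketbra (b1 ⟨0, hd₁⟩), isDensity_ketbra _ (b1.orthonormal.1 _)⟩⟩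
  refine ciSup_le fun ρ₁ => ciSup_le fun i => ?_
  -- the eigenvector φ on H₁ with maximal positive eigenvalue r
  obtain ⟨φ, r, hφ1, hr0, hφD, hle⟩ := key_bound hd₁ a'1 b1 i ρ₁.1 ρ₁.2
  set n0 : Fin d₂ := ⟨0, hd₂⟩ with hn0
  -- the real data
  set x : ℝ := ‖⟪b1 i, φ⟫‖ ^ 2 with hx
  set y : ℝ := ∑ j, ‖⟪a'1 j, b1 i⟫‖ ^ 2 * ‖⟪a'1 j, φ⟫‖ ^ 2 with hy
  have hrxy : r = x - y := by
    have h1 := hφD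
    rw [inner_distOp] at h1
    exact_mod_cast h1.symm
  -- the product state on H
  set ψ : H := T φ (b2 n0) with hψdef
  have hinnerφ : ⟪φ, φ⟫ = (1 : ℂ) := by
    rw [inner_self_eq_norm_sq_to_K, hφ1]; norm_num
  have hinnerb2 : ⟪b2 n0, b2 n0⟫ = (1 : ℂ) := by
    rw [inner_self_eq_norm_sq_to_K, b2.orthonormal.1 n0]; norm_num
  have hψ1 : ‖ψ‖ = 1 := by
    have h1 : ⟪ψ, ψ⟫ = (1 : ℂ) := by
      rw [hψdef, hT, hinnerφ, hinnerb2, mul_one]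
    rw [inner_self_eq_norm_sq_to_K] at h1
    have h2 : ‖ψ‖ ^ 2 = (1 : ℝ) := by
      have h3 : ((‖ψ‖ ^ 2 : ℝ) : ℂ) = ((1 : ℝ) : ℂ) := by push_cast; simpa using h1
      exact_mod_cast h3
    nlinarith [norm_nonneg ψ]
  -- compute the value of the big disturbance on ψ at index (i, n0)
  set dm : Fin d₂ → ℝ := fun m => ‖⟪a'2 m, b2 n0⟫‖ ^ 2 with hdm
  have hdm1 : ∑ m, dm m = 1 := by
    rw [hdm]
    have := sum_normsq_inner a'2 (b2 n0)
    rw [this, b2.orthonormal.1 n0]; norm_num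
  have hdmle : ∀ m, dm m ≤ 1 := by
    intro m
    rw [← hdm1]
    exact Finset.single_le_sum (fun l _ => by positivity) (Finset.mem_univ m)
  have hs1 : ∑ m, (dm m) ^ 2 ≤ 1 := by
    rw [← hdm1]
    exact Finset.sum_le_sum fun m _ => by
      have h0 : 0 ≤ dm m := by positivity
      nlinarith [hdmle m]
  have e1 : ⟪B (i, n0), ψ⟫ = ⟪b1 i, φ⟫ := by
    rw [hψdef, hB, hT, hinnerb2, mul_one]
  have e2 : ∀ j m, ‖⟪A' (j, m), B (i, n0)⟫‖ ^ 2 = ‖⟪a'1 j, b1 i⟫‖ ^ 2 * dm m := by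
    intro j m
    rw [hA'ystem, hB, hT, norm_mul, mul_pow, hdm]
  have e3 : ∀ j m, ‖⟪A' (j, m), ψ⟫‖ ^ 2 = ‖⟪a'1 j, φ⟫‖ ^ 2 * dm m := by
    intro j m
    rw [hA'ystem, hψdef, hT, norm_mul, mul_pow, hdm]
  have hsum2 : ∑ q : Fin d₁ × Fin d₂, ‖⟪A' q, B (i, n0)⟫‖ ^ 2 * ‖⟪A' q, ψ⟫‖ ^ 2
      = (∑ j, ‖⟪a'1 j, b1 i⟫‖ ^ 2 * ‖⟪a'1 j, φ⟫‖ ^ 2) * ∑ m, (dm m) ^ 2 := by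
    rw [Fintype.sum_prod_type, Finset.sum_mul]
    refine Finset.sum_congr rfl fun j _ => ?_
    rw [Finset.mul_sum]
    refine Finset.sum_congr rfl fun m _ => ?_
    rw [e2 j m, e3 j m]
    ring
  have hval : ⟪ψ, distOp A' B (i, n0) ψ⟫
      = ((x - (∑ j, ‖⟪a'1 j, b1 i⟫‖ ^ 2 * ‖⟪a'1 j, φ⟫‖ ^ 2) * ∑ m, (dm m) ^ 2 : ℝ) : ℂ) := by
    rw [inner_distOp, hsum2, e1, ← hx]
  have hyv : (0:ℝ) ≤ (∑ j, ‖⟪a'1 j, b1 i⟫‖ ^ 2 * ‖⟪a'1 j, φ⟫‖ ^ 2) :=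
    Finset.sum_nonneg fun j _ => by positivity
  have hvr : r ≤ (⟪ψ, distOp A' B (i, n0) ψ⟫).re := by
    rw [hval, Complex.ofReal_re, hrxy, hy]
    nlinarith [hs1, hyv]
  -- assemble
  have hstep1 : r ≤ ‖LinearMap.trace ℂ H (ketbra ψ ∘ₗ distOp A' B (i, n0))‖ := by
    rw [trace_ketbra_comp]
    exact le_trans hvr (Complex.re_le_norm _)
  have hstep2 : ‖LinearMap.trace ℂ H (ketbra ψ ∘ₗ distOp A' B (i, n0))‖
      ≤ sdDist A' B (ketbra ψ) := by
    unfold sdDist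
    exact le_ciSup (f := fun p : Fin d₁ × Fin d₂ =>
      ‖LinearMap.trace ℂ H (ketbra ψ ∘ₗ distOp A' B p)‖)
      (Set.Finite.bddAbove (Set.finite_range _)) (i, n0)
  have hstep3 : sdDist A' B (ketbra ψ) ≤ siDist A' B := by
    unfold siDist
    exact le_ciSup (f := fun ρ : {ρ : H →ₗ[ℂ] H // IsDensity ρ} => sdDist A' B ρ.1) hBdd
      ⟨ketbra ψ, isDensity_ketbra ψ hψ1⟩
  calc ‖LinearMap.trace ℂ H₁ (ρ₁.1 ∘ₗ distOp (⇑a'1) (⇑b1) i)‖ ≤ r := hle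
    _ ≤ siDist A' B := le_trans hstep1 (le_trans hstep2 hstep3)
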